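/- Every nonempty even-visiting closed walk has length divisible by 4. That is, if L > 0 and there exists a closed walk of length L in which every site different from 0 is visited an even number of times, then 4 divides L. -/
import Mathlib


/-- A walk of length `L`: a function `s : Fin (L+1) → ℤ` with `s 0 = 0` and
unit steps `|s (i+1) - s i| = 1` for all `i < L`. -/
def IsWalk (L : ℕ) (s : Fin (L + 1) → ℤ) : Prop :=
  s 0 = 0 ∧ ∀ i : Fin L, |s i.succ - s i.castSucc| = 1

/-- A closed walk: a walk that ends at the origin. -/
def IsClosedWalk (L : ℕ) (s : Fin (L + 1) → ℤ) : Prop :=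
  IsWalk L s ∧ s (Fin.last L) = 0

/-- The number of visits of the walk `s` to the site `x`. -/
def visits (L : ℕ) (s : Fin (L + 1) → ℤ) (x : ℤ) : ℕ :=
  Fintype.card {i : Fin (L + 1) // s i = x}

/-- A walk is even-visiting if every site different from `0` is visited an
even number of times. -/
def EvenVisiting (L : ℕ) (s : Fin (L + 1) → ℤ) : Prop :=
  ∀ x : ℤ, x ≠ 0 → Even (visits L s x)

/-- The up-crossing count `u(j)`: the number of indices `i < L` with
`s i = j` and `s (i+1) = j + 1`. -/
def upcross (L : ℕ) (s : Fin (L + 1) → ℤ) (j : ℤ) : ℕ :=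
  Fintype.card {i : Fin L // s i.castSucc = j ∧ s i.succ = j + 1}


lemma key_even_visiting (L : ℕ) (t : ℕ → ℤ) (h0 : t 0 = 0) (hE : t L = 0)
    (hstep : ∀ n < L, |t (n+1) - t n| = 1)
    (heven : ∀ x : ℤ, x ≠ 0 →
      Even (((Finset.range (L+1)).filter (fun i => t i = x)).card)) :
    4 ∣ L := by
  classical
  set u : ℤ → ℕ := fun j =>
    ((Finset.range L).filter (fun i => t i = j ∧ t (i+1) = j+1)).card with hu
  set d : ℤ → ℕ := fun j =>
    ((Finset.range L).filter (fun i => t i = j+1 ∧ t (i+1) = j)).card with hd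
  -- steps are ±1
  have hpm : ∀ n < L, t (n+1) = t n + 1 ∨ t (n+1) = t n - 1 := by
    intro n hn
    have := hstep n hn
    rcases (abs_eq (by norm_num : (0:ℤ) ≤ 1)).mp this with h | h
    · left; omega
    · right; omega
  -- bound on positions
  have hbound : ∀ n, n ≤ L → |t n| ≤ (n : ℤ) := by
    intro n
    induction n with
    | zero => intro _; simp [h0]
    | succ n ih =>
      intro hn
      have h1 := ih (by omega)
      have h2 := hpm n (by omega)
      push_cast
      rcases h2 with h | h <;> rw [abs_le] at * <;> omega
  -- u j = d j : the walk crosses each edge equally often in both directions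
  have hud : ∀ j : ℤ, u j = d j := by
    intro j
    have htel : ∑ i ∈ Finset.range L,
        ((if j < t (i+1) then (1:ℤ) else 0) - (if j < t i then 1 else 0)) = 0 := by
      rw [Finset.sum_range_sub (fun n => if j < t n then (1:ℤ) else 0)]
      simp [h0, hE]
    have hterm : ∀ i ∈ Finset.range L,
        ((if j < t (i+1) then (1:ℤ) else 0) - (if j < t i then 1 else 0)) =
        ((if t i = j ∧ t (i+1) = j+1 then (1:ℤ) else 0) -
         (if t i = j+1 ∧ t (i+1) = j then 1 else 0)) := by
      intro i hi
      rw [Finset.mem_range] at hi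
      rcases hpm i hi with h | h <;> split_ifs <;> omega
    rw [Finset.sum_congr rfl hterm, Finset.sum_sub_distrib,
      Finset.sum_boole, Finset.sum_boole] at htel
    have : (u j : ℤ) = d j := by rw [hu, hd]; push_cast; omega
    exact_mod_cast this
  -- crossing counts vanish far away
  have hzero : ∀ j : ℤ, (L:ℤ) ≤ |j| → u j = 0 := by
    intro j hj
    rw [hu, Finset.card_eq_zero, Finset.filter_eq_empty_iff]
    intro i hi
    rw [Finset.mem_range] at hi
    rintro ⟨h1, -⟩
    have := hbound i (by omega)
    rw [h1] at this
    have : (i:ℤ) < L := by exact_mod_cast hi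
    omega
  -- length decomposition : L = 2 * ∑ u j
  set S : Finset ℤ := Finset.Icc (-(L:ℤ)) L with hS
  have hmem : ∀ i ∈ Finset.range L, min (t i) (t (i+1)) ∈ S := by
    intro i hi
    rw [Finset.mem_range] at hi
    have b1 := hbound i (by omega)
    have b2 := hbound (i+1) (by omega)
    rw [hS, Finset.mem_Icc]
    push_cast at b1 b2 ⊢
    rw [abs_le] at b1 b2
    omega
  have hfiber : ∀ j ∈ S, ((Finset.range L).filter
      (fun i => min (t i) (t (i+1)) = j)).card = u j + d j := by
    intro j _
    rw [hu, hd]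
    rw [← Finset.card_union_of_disjoint (by
      rw [Finset.disjoint_left]
      intro i hi hi'
      simp only [Finset.mem_filter] at hi hi'
      omega)]
    congr 1
    ext i
    simp only [Finset.mem_union, Finset.mem_filter, Finset.mem_range]
    constructor
    · rintro ⟨hi, hmin⟩
      rcases hpm i hi with h | h
      · exact Or.inl ⟨hi, by omega, by omega⟩
      · exact Or.inr ⟨hi, by omega, by omega⟩
    · rintro (⟨hi, h1, h2⟩ | ⟨hi, h1, h2⟩) <;> exact ⟨hi, by omega⟩
  have hL2 : L = 2 * ∑ j ∈ S, u j := by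
    have hcard := Finset.card_eq_sum_card_fiberwise hmem
    rw [Finset.card_range] at hcard
    rw [hcard, Finset.sum_congr rfl hfiber, Finset.mul_sum]
    exact Finset.sum_congr rfl fun j _ => by rw [← hud j, two_mul]
  -- visits identity : visits to x = u (x-1) + d x
  have hvis : ∀ x : ℤ, x ≠ 0 →
      ((Finset.range (L+1)).filter (fun i => t i = x)).card = u (x-1) + d x := by
    intro x hx
    have himg : (Finset.range (L+1)).filter (fun i => t i = x) =
        (((Finset.range L).filter (fun i => t i = x-1 ∧ t (i+1) = x)) ∪
         ((Finset.range L).filter (fun i => t i = x+1 ∧ t (i+1) = x))).image (· + 1) := by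
      ext k
      simp only [Finset.mem_image, Finset.mem_union, Finset.mem_filter, Finset.mem_range]
      constructor
      · rintro ⟨hk, htk⟩
        have hk0 : k ≠ 0 := by rintro rfl; exact hx (htk ▸ h0 ▸ rfl)
        obtain ⟨i, rfl⟩ : ∃ i, k = i + 1 := ⟨k - 1, by omega⟩
        refine ⟨i, ?_, rfl⟩
        rcases hpm i (by omega) with h | h
        · exact Or.inl ⟨by omega, by omega, htk⟩
        · exact Or.inr ⟨by omega, by omega, htk⟩
      · rintro ⟨i, (⟨hi, h1, h2⟩ | ⟨hi, h1, h2⟩), rfl⟩ <;> exact ⟨by omega, h2⟩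
    rw [himg, Finset.card_image_of_injective _ (add_left_injective 1),
      Finset.card_union_of_disjoint (by
        rw [Finset.disjoint_left]
        intro i hi hi'
        simp only [Finset.mem_filter] at hi hi'
        omega)]
    rw [hu, hd]
    congr 2
    ext i
    simp only [Finset.mem_filter]
    constructor
    · rintro ⟨hi, h1, h2⟩; exact ⟨hi, h1, by omega⟩
    · rintro ⟨hi, h1, h2⟩; exact ⟨hi, h1, by omega⟩
  -- parity relation between neighboring upcrossing counts
  have hpar : ∀ x : ℤ, x ≠ 0 → Even (u (x-1) + u x) := by
    intro x hx
    have := heven x hx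
    rw [hvis x hx, ← hud x] at this
    exact this
  -- all upcrossing counts are even
  have hueven : ∀ j : ℤ, Even (u j) := by
    have hA : ∀ n : ℕ, n ≤ L → Even (u ((L:ℤ) - n)) := by
      intro n
      induction n with
      | zero => intro _; simp [hzero (L:ℤ) (by simp)]
      | succ n ih =>
        intro hn
        have ihn := ih (by omega)
        have hx : ((L:ℤ) - n) ≠ 0 := by
          have : (n:ℤ) + 1 ≤ L := by exact_mod_cast hn
          omega
        have hh := hpar ((L:ℤ) - n) hx
        have heq : ((L:ℤ) - n) - 1 = (L:ℤ) - (n+1 : ℕ) := by push_cast; ring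
        rw [heq, Nat.even_add] at hh
        exact hh.mpr ihn
    have hB : ∀ n : ℕ, n + 1 ≤ L → Even (u (-(L:ℤ) + n)) := by
      intro n
      induction n with
      | zero => intro _; simp [hzero (-(L:ℤ)) (by simp)]
      | succ n ih =>
        intro hn
        have ihn := ih (by omega)
        have hx : (-(L:ℤ) + n + 1) ≠ 0 := by
          have : (n:ℤ) + 2 ≤ L := by exact_mod_cast hn
          omega
        have hh := hpar (-(L:ℤ) + n + 1) hx
        have heq : (-(L:ℤ) + n + 1) - 1 = -(L:ℤ) + n := by ring
        rw [heq, Nat.even_add] at hh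
        have : Even (u (-(L:ℤ) + n + 1)) := hh.mp ihn
        convert this using 2
        push_cast; ring
    intro j
    by_cases hj : (L:ℤ) ≤ |j|
    · simp [hzero j hj]
    · rw [not_le, abs_lt] at hj
      by_cases hj0 : 0 ≤ j
      · have heq : (L:ℤ) - ((L:ℤ) - j).toNat = j := by omega
        have := hA ((L:ℤ) - j).toNat (by omega)
        rwa [heq] at this
      · have heq : -(L:ℤ) + (j + L).toNat = j := by omega
        have := hB (j + (L:ℤ)).toNat (by omega)
        rwa [heq] at this
  -- conclude
  obtain ⟨k, hk⟩ := Finset.even_sum (s := S) (f := u) (fun j _ => hueven j)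
  exact ⟨k, by omega⟩

/-- Every nonempty even-visiting closed walk has length divisible by 4. -/
theorem even_visiting_length_div_four (L : ℕ) (hL : 0 < L)
    (h : ∃ s : Fin (L + 1) → ℤ, IsClosedWalk L s ∧ EvenVisiting L s) :
    4 ∣ L := by
  classical
  obtain ⟨s, ⟨⟨hs0, hstep⟩, hsL⟩, hev⟩ := h
  set t : ℕ → ℤ := fun n => s ⟨min n L, Nat.lt_succ_of_le (min_le_right n L)⟩ with ht
  have htval : ∀ i : Fin (L+1), t i = s i := by
    intro i
    rw [ht]
    exact congrArg s (Fin.ext (by simp [Nat.min_eq_left (Nat.lt_succ_iff.mp i.isLt)]))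
  refine key_even_visiting L t ?_ ?_ ?_ ?_
  · have := htval 0
    simpa using this ▸ hs0
  · have := htval (Fin.last L)
    simp only [Fin.val_last] at this
    rw [this]; exact hsL
  · intro n hn
    have h1 : t (n+1) = s (Fin.succ ⟨n, hn⟩) := by
      have := htval (Fin.succ ⟨n, hn⟩)
      simpa using this
    have h2 : t n = s (Fin.castSucc ⟨n, hn⟩) := by
      have := htval (Fin.castSucc ⟨n, hn⟩)
      simpa using this
    rw [h1, h2]
    exact hstep ⟨n, hn⟩
  · intro x hx
    have hv := hev x hx
    rw [visits, Fintype.card_subtype] at hv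
    convert hv using 2
    rw [Finset.card_filter, Finset.card_filter,
      ← Fin.sum_univ_eq_sum_range (fun n => if t n = x then 1 else 0) (L+1)]
    exact Finset.sum_congr rfl fun i _ => by rw [htval i]
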